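/- In the setup of Garland's method, for 1 ≤ k ≤ n−1, φ ∈ C^k(X,π) and ψ ∈ C^k(X,π̄), the adjoint differentials satisfy ⟨d̄*_{k−1}φ, d*_{k−1}ψ⟩ = (1/k!) Σ_{τ ∈ Σ(k−1,Γ)} (1/|Γ_τ|) ⟨(M_τ ⊗ id_𝔼) φ_τ, ψ_τ⟩_τ, where M_τ is the averaging projection onto constants on ℓ²(V_τ, m_τ). -/

import Mathlib

noncomputable section

open scoped BigOperators Classical

/-! ## Garland's setup: a locally finite pure `n`-dimensional simplicial complex `X`
(a downward-closed set `K` of finsets of the vertex type `V`), a locally compact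
unimodular group `Γ` (with Haar measure `μ`) acting on `X` cocompactly (finitely
many orbits of simplices, witnessed by finite sets of orbit representatives) and
properly (stabilizers of simplices have finite positive Haar measure), and a
continuous isometric representation `π` of `Γ` on a Banach space `E`. -/

/-- Simplices of `K` of cardinality `j` containing `σ`. -/
def cofacesCard {V : Type} (K : Set (Finset V)) (σ : Finset V) (j : ℕ) :
    Set (Finset V) :=
  {η : Finset V | η ∈ K ∧ σ ⊆ η ∧ η.card = j}

/-- The standard weight of a pure `n`-dimensional weighted simplicial complex. -/
structure IsStdWeight {V : Type} (K : Set (Finset V)) (n : ℕ) (m : Finset V → ℝ) :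
    Prop where
  top_eq : ∀ σ ∈ K, σ.card = n + 1 → m σ = 1
  rec_eq : ∀ τ, τ ∈ K → ∀ k : ℕ, k < n → τ.card = k + 1 →
    ∀ h : (cofacesCard K τ (k + 2)).Finite, m τ = ∑ η ∈ h.toFinset, m η

/-- Ordered `k`-simplices of the complex `K`: injective `(k+1)`-tuples of vertices
spanning a simplex of `K`. -/
def OSimp {V : Type} [DecidableEq V] (K : Set (Finset V)) (k : ℕ) :
    Set (Fin (k + 1) → V) :=
  {σ | Function.Injective σ ∧ Finset.image σ Finset.univ ∈ K}

/-- The underlying (unordered) simplex of an ordered simplex. -/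
def simplexOf {V : Type} [DecidableEq V] {k : ℕ} (σ : Fin (k + 1) → V) : Finset V :=
  Finset.image σ Finset.univ

/-- The action of `g ∈ Γ` on ordered simplices. -/
def gAct {V Γ : Type} [Group Γ] [MulAction Γ V] (g : Γ) {k : ℕ}
    (σ : Fin (k + 1) → V) : Fin (k + 1) → V :=
  fun i => g • σ i

/-- The pointwise stabilizer of an ordered simplex. -/
def stabSet {V Γ : Type} [Group Γ] [MulAction Γ V] {k : ℕ}
    (σ : Fin (k + 1) → V) : Set Γ :=
  {g : Γ | gAct g σ = σ}

/-- `|Γ_σ|`: the Haar measure of the pointwise stabilizer of `σ`. -/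
def stabVol {V Γ : Type} [Group Γ] [MulAction Γ V] [MeasurableSpace Γ]
    (μ : MeasureTheory.Measure Γ) {k : ℕ} (σ : Fin (k + 1) → V) : ℝ :=
  (μ (stabSet σ)).toReal

/-- `R` is a set of representatives for the `Γ`-orbits on `Σ(k)`, i.e. `Σ(k,Γ)`
(a finite such set witnesses cocompactness of the action). -/
def IsReps {V : Type} (Γ : Type) [Group Γ] [MulAction Γ V] [DecidableEq V]
    (K : Set (Finset V)) (k : ℕ) (R : Finset (Fin (k + 1) → V)) : Prop :=
  (∀ τ ∈ R, τ ∈ OSimp K k) ∧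
    ∀ σ ∈ OSimp K k, ∃! τ, τ ∈ R ∧ ∃ g : Γ, gAct g τ = σ

/-- A cochain is alternating. -/
def IsAlternating {V E : Type} [AddCommGroup E] {k : ℕ}
    (φ : (Fin (k + 1) → V) → E) : Prop :=
  ∀ (σ : Fin (k + 1) → V) (γ : Equiv.Perm (Fin (k + 1))),
    φ (σ ∘ γ) = (Equiv.Perm.sign γ : ℤ) • φ σ

/-- A cochain is `Γ`-equivariant (w.r.t. the representation `π`). -/
def IsEquivariant {V Γ E : Type} [Group Γ] [MulAction Γ V]
    [NormedAddCommGroup E] [NormedSpace ℂ E] (π : Γ →* (E →L[ℂ] E)) {k : ℕ}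
    (φ : (Fin (k + 1) → V) → E) : Prop :=
  ∀ (g : Γ) (σ : Fin (k + 1) → V), φ (gAct g σ) = π g (φ σ)

/-- A dual cochain is `Γ`-equivariant w.r.t. the dual representation
`π̄(g) = (π(g⁻¹))*`. -/
def IsDualEquivariant {V Γ E : Type} [Group Γ] [MulAction Γ V]
    [NormedAddCommGroup E] [NormedSpace ℂ E] (π : Γ →* (E →L[ℂ] E)) {k : ℕ}
    (ψ : (Fin (k + 1) → V) → StrongDual ℂ E) : Prop :=
  ∀ (g : Γ) (σ : Fin (k + 1) → V), ψ (gAct g σ) = (ψ σ).comp (π g⁻¹)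

/-- The simplicial differential `(d_kφ)(σ) = Σ_i (−1)^i φ(σ_i)`. -/
def diff {V E : Type} [AddCommGroup E] {k : ℕ} (φ : (Fin (k + 1) → V) → E) :
    (Fin (k + 2) → V) → E :=
  fun σ => ∑ i : Fin (k + 2), ((-1 : ℤ) ^ (i : ℕ)) • φ (σ ∘ i.succAbove)

/-- The squared norm `‖φ‖² = Σ_{σ∈Σ(k,Γ)} m(σ)/((k+1)!|Γ_σ|) ‖φ(σ)‖²` of a
`k`-cochain. -/
def coNormSq {V Γ E : Type} [DecidableEq V] [Group Γ] [MulAction Γ V]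
    [MeasurableSpace Γ] [NormedAddCommGroup E] (μ : MeasureTheory.Measure Γ)
    (m : Finset V → ℝ) {k : ℕ} (R : Finset (Fin (k + 1) → V))
    (φ : (Fin (k + 1) → V) → E) : ℝ :=
  ∑ σ ∈ R, m (simplexOf σ) / ((k + 1).factorial * stabVol μ σ) * ‖φ σ‖ ^ 2

/-- The coupling `⟨φ,ψ⟩ = Σ_{σ∈Σ(k,Γ)} m(σ)/((k+1)!|Γ_σ|) (φ(σ),ψ(σ))` between
`k`-cochains and dual `k`-cochains. -/
def coPair {V Γ E : Type} [DecidableEq V] [Group Γ] [MulAction Γ V]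
    [MeasurableSpace Γ] [NormedAddCommGroup E] [NormedSpace ℂ E]
    (μ : MeasureTheory.Measure Γ) (m : Finset V → ℝ) {k : ℕ}
    (R : Finset (Fin (k + 1) → V)) (φ : (Fin (k + 1) → V) → E)
    (ψ : (Fin (k + 1) → V) → StrongDual ℂ E) : ℂ :=
  ∑ σ ∈ R, ((m (simplexOf σ) / ((k + 1).factorial * stabVol μ σ) : ℝ) : ℂ) *
    ψ σ (φ σ)

/-- Edge weight `m_τ({u,v}) = m(τ ∪ {u,v})` of the 1-skeleton of the link of the
simplex `t` (zero if `{u,v}` is not an edge of the link). -/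
def linkW {V : Type} [DecidableEq V] (K : Set (Finset V)) (m : Finset V → ℝ)
    (t : Finset V) (u v : V) : ℝ :=
  if u ≠ v ∧ u ∉ t ∧ v ∉ t ∧ insert u (insert v t) ∈ K then
    m (insert u (insert v t)) else 0

/-- The adjoint differential
`(d*_kφ)(τ) = Σ_{v : vτ ∈ Σ(k+1)} (m(vτ)/m(τ)) φ(vτ)`, where `L τ` is the vertex
set of the link of `τ`. -/
def codiffOp {V F : Type} [DecidableEq V] [NormedAddCommGroup F] [NormedSpace ℂ F]
    (m : Finset V → ℝ) {j : ℕ} (L : (Fin (j + 1) → V) → Finset V)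
    (φ : (Fin (j + 2) → V) → F) : (Fin (j + 1) → V) → F :=
  fun τ => ∑ v ∈ L τ,
    ((m (insert v (simplexOf τ)) / m (simplexOf τ) : ℝ) : ℂ) • φ (Fin.cons v τ)

/-- In Garland's setup, for `k = j+1` (`1 ≤ k ≤ n−1`),
`φ ∈ C^k(X,π)` and `ψ ∈ C^k(X,π̄)`:
`⟨d̄*_{k−1}φ, d*_{k−1}ψ⟩ = (1/k!) Σ_{τ∈Σ(k−1,Γ)} (1/|Γ_τ|) ⟨(M_τ ⊗ id_E)φ_τ, ψ_τ⟩_τ`,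
where `M_τ` is the averaging projection onto constants on `ℓ²(V_τ,m_τ)`. -/
theorem stmt14 {V Γ : Type} [DecidableEq V] [Group Γ] [MulAction Γ V]
    [TopologicalSpace Γ] [IsTopologicalGroup Γ] [LocallyCompactSpace Γ]
    [MeasurableSpace Γ] [BorelSpace Γ]
    (μ : MeasureTheory.Measure Γ) [μ.IsHaarMeasure] [μ.IsMulRightInvariant]
    {E : Type} [NormedAddCommGroup E] [NormedSpace ℂ E] [CompleteSpace E]
    (hrefl : Function.Surjective (NormedSpace.inclusionInDoubleDual ℂ E))
    (K : Set (Finset V)) (n : ℕ)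
    (hdown : ∀ σ ∈ K, ∀ τ : Finset V, τ ⊆ σ → τ.Nonempty → τ ∈ K)
    (hpure : ∀ σ ∈ K, ∃ η ∈ K, σ ⊆ η ∧ η.card = n + 1)
    (hlocfin : ∀ σ, σ ∈ K → ∀ i : ℕ, (cofacesCard K σ i).Finite)
    (hKinv : ∀ (g : Γ), ∀ σ ∈ K, Finset.image (g • ·) σ ∈ K)
    (m : Finset V → ℝ) (hm : IsStdWeight K n m)
    (hproper : ∀ (i : ℕ) (σ : Fin (i + 1) → V), σ ∈ OSimp K i → 0 < stabVol μ σ)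
    (π : Γ →* (E →L[ℂ] E)) (hπiso : ∀ (g : Γ) (x : E), ‖π g x‖ = ‖x‖)
    (hπcont : Continuous fun p : Γ × E => π p.1 p.2)
    (j : ℕ) (hj : j + 2 ≤ n)
    (Rj : Finset (Fin (j + 1) → V)) (hRj : IsReps Γ K j Rj)
    (L : (Fin (j + 1) → V) → Finset V)
    (hL : ∀ (τ : Fin (j + 1) → V) (v : V),
      v ∈ L τ ↔ v ∉ simplexOf τ ∧ insert v (simplexOf τ) ∈ K)
    (φ : (Fin (j + 2) → V) → E) (hφalt : IsAlternating φ)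
    (hφeqv : IsEquivariant π φ)
    (ψ : (Fin (j + 2) → V) → StrongDual ℂ E) (hψalt : IsAlternating ψ)
    (hψeqv : IsDualEquivariant π ψ) :
    coPair μ m Rj (codiffOp m L φ) (codiffOp m L ψ)
      = (((j + 1).factorial : ℂ))⁻¹ *
        ∑ τ ∈ Rj, ((stabVol μ τ : ℝ) : ℂ)⁻¹ *
          ∑ v ∈ L τ, ((m (insert v (simplexOf τ)) : ℝ) : ℂ) *
            ψ (Fin.cons v τ)
              (∑ u ∈ L τ,
                ((m (insert u (simplexOf τ)) / m (simplexOf τ) : ℝ) : ℂ) •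
                  φ (Fin.cons u τ)) := by
  classical
  have hstab : ∀ τ ∈ Rj, stabVol μ τ ≠ 0 :=
    fun τ hτ => (hproper j τ (hRj.1 τ hτ)).ne'
  have hc : (((j + 1).factorial : ℝ) : ℂ) ≠ 0 := by
    simp [Nat.factorial_ne_zero]
  unfold coPair codiffOp
  rw [Finset.mul_sum]
  refine Finset.sum_congr rfl fun τ hτ => ?_
  set x := ∑ u ∈ L τ,
      ((m (insert u (simplexOf τ)) / m (simplexOf τ) : ℝ) : ℂ) • φ (Fin.cons u τ)
    with hxdef
  simp only [ContinuousLinearMap.sum_apply, ContinuousLinearMap.smul_apply, smul_eq_mul]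
  rw [Finset.mul_sum, Finset.mul_sum, Finset.mul_sum]
  refine Finset.sum_congr rfl fun v hv => ?_
  by_cases hmτ : m (simplexOf τ) = 0
  · have hx : x = 0 := by simp [hxdef, hmτ]
    simp [hx, hmτ]
  · have hg : ((stabVol μ τ : ℝ) : ℂ) ≠ 0 := by exact_mod_cast hstab τ hτ
    have hmτ' : ((m (simplexOf τ) : ℝ) : ℂ) ≠ 0 := by exact_mod_cast hmτ
    have hgR : stabVol μ τ ≠ 0 := hstab τ hτ
    have hcR : (((j + 1).factorial : ℕ) : ℝ) ≠ 0 :=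
      Nat.cast_ne_zero.mpr (Nat.factorial_ne_zero _)
    have keyR : m (simplexOf τ) / (((j + 1).factorial : ℕ) * stabVol μ τ) *
        (m (insert v (simplexOf τ)) / m (simplexOf τ))
        = ((((j + 1).factorial : ℕ) : ℝ))⁻¹ * (stabVol μ τ)⁻¹ *
          m (insert v (simplexOf τ)) := by
      field_simp
    have key : ((m (simplexOf τ) / ((j + 1).factorial * stabVol μ τ) : ℝ) : ℂ) *
        ((m (insert v (simplexOf τ)) / m (simplexOf τ) : ℝ) : ℂ)
        = ((((j + 1).factorial : ℝ) : ℂ))⁻¹ * (((stabVol μ τ : ℝ) : ℂ))⁻¹ *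
          ((m (insert v (simplexOf τ)) : ℝ) : ℂ) := by
      exact_mod_cast keyR
    rw [← mul_assoc, key]
    push_cast
    ring
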